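/- The explicit functions x(t) = C₁ t^(-1+3(α₀+α₁+α₂))/(α₀+α₁+α₂-α₃) + C₁² t^(-4+6(α₀+α₁+α₂))/(4(α₀+α₁+α₂-2α₃)) + C₂ t^(2-3(α₀+α₁+α₂)) and y(t) = C₁ t^(α₀+α₁+α₂-2α₃) satisfy the Hamiltonian system dx/dt = (3y(y+4t) - 4(α₀+α₁+α₂-2α₃)x)/(4t), dy/dt = (α₀+α₁+α₂-2α₃)y/t, for any constants C₁, C₂, assuming α₀+α₁+α₂+α₃ = 1 and the denominators α₀+α₁+α₂-α₃ and α₀+α₁+α₂-2α₃ are nonzero. -/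

import Mathlib

set_option maxHeartbeats 1000000

open Complex

private lemma deriv_cpow_real (c : ℂ) {t : ℝ} (ht : 0 < t) :
    HasDerivAt (fun s : ℝ => (s : ℂ) ^ c) (c * (t : ℂ) ^ (c - 1)) t := by
  rcases eq_or_ne c 0 with rfl | hc
  · simpa using hasDerivAt_const t (1 : ℂ)
  · have hr : c - 1 ≠ -1 := fun h => hc (by linear_combination h)
    have h := (hasDerivAt_ofReal_cpow_const' (ne_of_gt ht) hr).const_mul c
    simp only [sub_add_cancel] at h
    have hfun : (fun y : ℝ => c * ((y : ℂ) ^ c / c)) = fun y : ℝ => (y : ℂ) ^ c := by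
      funext y; field_simp
    rwa [hfun] at h

/-- The explicit functions x(t), y(t) solve the Hamiltonian system for K₁. -/
theorem stmt_0 (α₀ α₁ α₂ α₃ C₁ C₂ : ℂ)
    (hrel : α₀ + α₁ + α₂ + α₃ = 1)
    (h1 : α₀ + α₁ + α₂ - α₃ ≠ 0)
    (h2 : α₀ + α₁ + α₂ - 2 * α₃ ≠ 0)
    (x y : ℝ → ℂ)
    (hx : ∀ t : ℝ, x t =
      C₁ * (t : ℂ) ^ (-1 + 3 * (α₀ + α₁ + α₂)) / (α₀ + α₁ + α₂ - α₃)
      + C₁ ^ 2 * (t : ℂ) ^ (-4 + 6 * (α₀ + α₁ + α₂)) / (4 * (α₀ + α₁ + α₂ - 2 * α₃))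
      + C₂ * (t : ℂ) ^ (2 - 3 * (α₀ + α₁ + α₂)))
    (hy : ∀ t : ℝ, y t = C₁ * (t : ℂ) ^ (α₀ + α₁ + α₂ - 2 * α₃)) :
    ∀ t : ℝ, 0 < t →
      HasDerivAt x
        ((3 * y t * (y t + 4 * (t : ℂ)) - 4 * (α₀ + α₁ + α₂ - 2 * α₃) * x t)
          / (4 * (t : ℂ))) t ∧
      HasDerivAt y ((α₀ + α₁ + α₂ - 2 * α₃) * y t / (t : ℂ)) t := by
  have h3 : α₃ = 1 - (α₀ + α₁ + α₂) := by linear_combination hrel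
  subst h3
  intro t ht
  obtain ⟨A, hA⟩ : ∃ A : ℂ, α₀ + α₁ + α₂ = A := ⟨_, rfl⟩
  rw [hA] at h1 h2 hx hy ⊢
  have ht0 : (t : ℂ) ≠ 0 := ofReal_ne_zero.mpr ht.ne'
  obtain ⟨U, hU⟩ : ∃ U : ℂ, (t : ℂ) ^ (A - 2 * (1 - A)) = U := ⟨_, rfl⟩
  have hUne : U ≠ 0 := by
    rw [← hU]; simp [Complex.cpow_eq_zero_iff, ht0]
  have h_a : (t : ℂ) ^ (-1 + 3 * A) = U * t := by
    rw [show (-1 + 3 * A) = (A - 2 * (1 - A)) + 1 by ring,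
      Complex.cpow_add _ _ ht0, Complex.cpow_one, hU]
  have h_a1 : (t : ℂ) ^ (-1 + 3 * A - 1) = U := by
    rw [show (-1 + 3 * A - 1) = (A - 2 * (1 - A)) by ring, hU]
  have h_b : (t : ℂ) ^ (-4 + 6 * A) = U * U := by
    rw [show (-4 + 6 * A) = (A - 2 * (1 - A)) + (A - 2 * (1 - A)) by ring,
      Complex.cpow_add _ _ ht0, hU]
  have h_b1 : (t : ℂ) ^ (-4 + 6 * A - 1) = U * U / t := by
    rw [show (-4 + 6 * A - 1) = ((A - 2 * (1 - A)) + (A - 2 * (1 - A))) - 1 by ring,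
      Complex.cpow_sub _ _ ht0, Complex.cpow_add _ _ ht0, Complex.cpow_one, hU]
  have h_e : (t : ℂ) ^ (2 - 3 * A) = U⁻¹ := by
    rw [show (2 - 3 * A) = -(A - 2 * (1 - A)) by ring, Complex.cpow_neg, hU]
  have h_e1 : (t : ℂ) ^ (2 - 3 * A - 1) = (U * t)⁻¹ := by
    rw [show (2 - 3 * A - 1) = -((A - 2 * (1 - A)) + 1) by ring,
      Complex.cpow_neg, Complex.cpow_add _ _ ht0, Complex.cpow_one, hU]
  have h_c1 : (t : ℂ) ^ (A - 2 * (1 - A) - 1) = U / t := by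
    rw [show (A - 2 * (1 - A) - 1) = (A - 2 * (1 - A)) - 1 by ring,
      Complex.cpow_sub _ _ ht0, Complex.cpow_one, hU]
  have hxfun : x = fun s : ℝ =>
      C₁ * (s : ℂ) ^ (-1 + 3 * A) / (A - (1 - A))
      + C₁ ^ 2 * (s : ℂ) ^ (-4 + 6 * A) / (4 * (A - 2 * (1 - A)))
      + C₂ * (s : ℂ) ^ (2 - 3 * A) := funext hx
  have hyfun : y = fun s : ℝ => C₁ * (s : ℂ) ^ (A - 2 * (1 - A)) := funext hy
  constructor
  · have D : HasDerivAt x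
        (C₁ * ((-1 + 3 * A) * (t : ℂ) ^ (-1 + 3 * A - 1)) / (A - (1 - A))
          + C₁ ^ 2 * ((-4 + 6 * A) * (t : ℂ) ^ (-4 + 6 * A - 1)) / (4 * (A - 2 * (1 - A)))
          + C₂ * ((2 - 3 * A) * (t : ℂ) ^ (2 - 3 * A - 1))) t := by
      rw [hxfun]
      exact ((((deriv_cpow_real _ ht).const_mul C₁).div_const _).add
        (((deriv_cpow_real _ ht).const_mul (C₁ ^ 2)).div_const _)).add
        ((deriv_cpow_real _ ht).const_mul C₂)
    refine D.congr_deriv ?_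
    rw [hx t, hy t, h_a, h_a1, h_b, h_b1, h_e, h_e1, hU]
    have g1 : (12 * (t : ℂ) * (C₁ * U)
          - 4 * (A - 2 * (1 - A)) * (C₁ * (U * (t : ℂ)) / (A - (1 - A)))) / (4 * (t : ℂ))
        = C₁ * ((-1 + 3 * A) * U) / (A - (1 - A)) := by
      field_simp
      ring
    have g2 : (3 * (C₁ * U) * (C₁ * U)
          - 4 * (A - 2 * (1 - A)) * (C₁ ^ 2 * (U * U) / (4 * (A - 2 * (1 - A))))) / (4 * (t : ℂ))
        = C₁ ^ 2 * ((-4 + 6 * A) * (U * U / (t : ℂ))) / (4 * (A - 2 * (1 - A))) := by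
      field_simp
      ring
    have g3 : (-(4 * (A - 2 * (1 - A)) * (C₂ * U⁻¹))) / (4 * (t : ℂ))
        = C₂ * ((2 - 3 * A) * (U * (t : ℂ))⁻¹) := by
      field_simp
      ring
    linear_combination -g1 - g2 - g3
  · have D : HasDerivAt y (C₁ * ((A - 2 * (1 - A)) * (t : ℂ) ^ (A - 2 * (1 - A) - 1))) t := by
      rw [hyfun]
      exact (deriv_cpow_real _ ht).const_mul C₁
    refine D.congr_deriv ?_
    rw [hy t, h_c1, hU]
    field_simp
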